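/- Let f : X → Y be a continuous monotone map between Priestley spaces. Then f is lower semi-open (the image of every open up-set of X is an open up-set of Y) if and only if f is bounded (the image of every up-set of X under f is an up-set of Y) and for every open up-set U of X, ↑f[U] is open in Y. -/
import Mathlib

/-- A continuous monotone map `f : X → Y` between Priestley spaces is lower
semi-open (images of open up-sets are open up-sets) iff `f` is bounded (images of up-sets
are up-sets) and `↑f[U]` is open for every open up-set `U ⊆ X`. -/
theorem stmt_6 {X Y : Type*} [TopologicalSpace X] [PartialOrder X] [CompactSpace X]
    [TopologicalSpace Y] [PartialOrder Y] [CompactSpace Y]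
    (htodX : ∀ x y : X, ¬x ≤ y → ∃ U : Set X, IsClopen U ∧ IsUpperSet U ∧ x ∈ U ∧ y ∉ U)
    (htodY : ∀ x y : Y, ¬x ≤ y → ∃ U : Set Y, IsClopen U ∧ IsUpperSet U ∧ x ∈ U ∧ y ∉ U)
    (f : X → Y) (hfc : Continuous f) (hfm : Monotone f) :
    (∀ U : Set X, IsOpen U → IsUpperSet U → IsOpen (f '' U) ∧ IsUpperSet (f '' U)) ↔
      ((∀ S : Set X, IsUpperSet S → IsUpperSet (f '' S)) ∧
        ∀ U : Set X, IsOpen U → IsUpperSet U →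
          IsOpen (↑(upperClosure (f '' U)) : Set Y)) := by
  have hT1 : T1Space Y := by
    rw [t1Space_iff_exists_open]
    intro a b hab
    by_cases h : a ≤ b
    · have hba : ¬ b ≤ a := fun h' => hab (le_antisymm h h')
      obtain ⟨U, hUc, _, hbU, haU⟩ := htodY b a hba
      exact ⟨Uᶜ, hUc.isClosed.isOpen_compl, haU, fun hb => hb hbU⟩
    · obtain ⟨U, hUc, _, haU, hbU⟩ := htodY a b h
      exact ⟨U, hUc.isOpen, haU, hbU⟩
  constructor
  · intro h
    -- key boundedness claim
    have key : ∀ x : X, ∀ b : Y, f x ≤ b → ∃ z, x ≤ z ∧ f z = b := by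
      intro x b hxb
      set ι := {U : Set X // IsClopen U ∧ IsUpperSet U ∧ x ∈ U} with hι
      have : Nonempty ι := ⟨⟨Set.univ, isClopen_univ, isUpperSet_univ, Set.mem_univ x⟩⟩
      set t : ι → Set X := fun U => U.1 ∩ f ⁻¹' {b} with ht
      have htcl : ∀ i : ι, IsClosed (t i) := fun i =>
        i.2.1.isClosed.inter (isClosed_singleton.preimage hfc)
      have htc : ∀ i : ι, IsCompact (t i) := fun i => (htcl i).isCompact
      have htn : ∀ i : ι, (t i).Nonempty := by
        intro i
        have := h i.1 i.2.1.isOpen i.2.2.1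
        have hb : b ∈ f '' i.1 := this.2 hxb ⟨x, i.2.2.2, rfl⟩
        obtain ⟨w, hw, hfw⟩ := hb
        exact ⟨w, hw, hfw⟩
      have htd : Directed (· ⊇ ·) t := by
        intro i j
        refine ⟨⟨i.1 ∩ j.1, i.2.1.inter j.2.1, i.2.2.1.inter j.2.2.1,
          ⟨i.2.2.2, j.2.2.2⟩⟩, ?_, ?_⟩
        · exact fun z hz => ⟨hz.1.1, hz.2⟩
        · exact fun z hz => ⟨hz.1.2, hz.2⟩
      obtain ⟨z, hz⟩ := IsCompact.nonempty_iInter_of_directed_nonempty_isCompact_isClosed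
        t htd htn htc htcl
      simp only [Set.mem_iInter] at hz
      refine ⟨z, ?_, ?_⟩
      · by_contra hxz
        obtain ⟨U, hUc, hUu, hxU, hzU⟩ := htodX x z hxz
        exact hzU (hz ⟨U, hUc, hUu, hxU⟩).1
      · exact (hz ⟨Set.univ, isClopen_univ, isUpperSet_univ, Set.mem_univ x⟩).2
    constructor
    · intro S hS a b hab ⟨x, hxS, hfx⟩
      obtain ⟨z, hxz, hfz⟩ := key x b (hfx ▸ hab)
      exact ⟨z, hS hxz hxS, hfz⟩
    · intro U hUo hUu
      have := h U hUo hUu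
      rw [this.2.upperClosure]
      exact this.1
  · rintro ⟨hb, ho⟩ U hUo hUu
    have hu : IsUpperSet (f '' U) := hb U hUu
    have h2 := ho U hUo hUu
    rw [hu.upperClosure] at h2
    exact ⟨h2, hu⟩
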